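/- arXiv:1310.3454 — 2 statements merged into one kernel-verified Lean document; each statement's English description precedes it below -/
import Mathlib

section
/- Let Σ be an M×M positive-definite Hermitian complex matrix and let H be an M×N complex matrix. Then there exists an M×M complex matrix W such that W Σ Wᴴ = I and W H is upper triangular (i.e., (W H) i j = 0 for i > j). -/
open Matrix ComplexOrder

theorem exists_ewf_triangularizing {M N : ℕ}
    (Sig : Matrix (Fin M) (Fin M) ℂ) (H : Matrix (Fin M) (Fin N) ℂ)
    (hSig : Sig.PosDef) :
    ∃ W : Matrix (Fin M) (Fin M) ℂ, W * Sig * Wᴴ = 1 ∧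
      ∀ (i : Fin M) (j : Fin N), (j : ℕ) < (i : ℕ) → (W * H) i j = 0 := by
  classical
  haveI : WellFoundedLT (Fin M) := inferInstance
  set S := (open scoped MatrixOrder in CFC.sqrt Sig) with hS
  have hSherm : Sᴴ = S := (open scoped MatrixOrder in (CFC.sqrt_nonneg Sig).posSemidef.1)
  have hSsq : S * S = Sig := (open scoped MatrixOrder in CFC.sqrt_mul_sqrt_self Sig hSig.posSemidef.nonneg)
  have hdet : IsUnit S.det := by
    have h2 : S.det * S.det = Sig.det := by
      rw [← det_mul, hSsq]
    have : Sig.det ≠ 0 := hSig.det_pos.ne'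
    exact isUnit_iff_ne_zero.2 (fun h => this (by rw [← h2, h, zero_mul]))
  have hSinv : (S⁻¹)ᴴ = S⁻¹ := by rw [conjTranspose_nonsing_inv, hSherm]
  have hwhite : S⁻¹ * Sig * (S⁻¹)ᴴ = 1 := by
    rw [hSinv, ← hSsq, ← Matrix.mul_assoc S⁻¹ S S, nonsing_inv_mul _ hdet, one_mul,
      mul_nonsing_inv _ hdet]
  -- Gram-Schmidt on columns of S⁻¹ * H
  let G := S⁻¹ * H
  let f : Fin M → EuclideanSpace ℂ (Fin M) := fun k =>
    if h : (k : ℕ) < N then (WithLp.equiv 2 _).symm (fun m => G m ⟨k, h⟩) else 0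
  have hdim : Module.finrank ℂ (EuclideanSpace ℂ (Fin M)) = Fintype.card (Fin M) := by
    simp
  let b := InnerProductSpace.gramSchmidtOrthonormalBasis hdim f
  let Q : Matrix (Fin M) (Fin M) ℂ := Matrix.of fun m i => b i m
  have hQ : Qᴴ * Q = 1 := by
    ext i j
    simp only [Matrix.mul_apply, conjTranspose_apply, Q, Matrix.of_apply, one_apply]
    have := orthonormal_iff_ite.mp b.orthonormal i j
    rw [← this]
    simp [PiLp.inner_apply, RCLike.inner_apply, mul_comm]
  refine ⟨Qᴴ * S⁻¹, ?_, ?_⟩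
  · calc Qᴴ * S⁻¹ * Sig * (Qᴴ * S⁻¹)ᴴ
        = Qᴴ * (S⁻¹ * Sig * (S⁻¹)ᴴ) * Q := by
          rw [conjTranspose_mul, conjTranspose_conjTranspose]
          simp only [Matrix.mul_assoc]
      _ = 1 := by rw [hwhite, mul_one, hQ]
  · intro i j hij
    have hjM : (j : ℕ) < M := lt_trans hij i.isLt
    have key : (inner ℂ (b i) (f ⟨(j : ℕ), hjM⟩) : ℂ) = 0 :=
      InnerProductSpace.gramSchmidtOrthonormalBasis_inv_triangular hdim f (show (⟨(j : ℕ), hjM⟩ : Fin M) < i from hij)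
    have hf : f ⟨(j : ℕ), hjM⟩ = (WithLp.equiv 2 _).symm (fun m => G m j) := by
      simp only [f, dif_pos j.isLt]
    have hGH : (Qᴴ * S⁻¹) * H = Qᴴ * G := by rw [Matrix.mul_assoc]
    rw [hGH]
    have : (Qᴴ * G) i j = (inner ℂ (b i) (f ⟨(j : ℕ), hjM⟩) : ℂ) := by
      rw [hf, PiLp.inner_apply]
      simp [Matrix.mul_apply, Q, RCLike.inner_apply, mul_comm]
    rw [this, key]
end

section
/- Let Σ be an M×M positive-definite Hermitian complex matrix and let S be an M×M complex matrix. Then there exists an M×M complex matrix W such that W Σ Wᴴ = I and W S is positive semi-definite Hermitian. -/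
open Matrix ComplexOrder
open scoped MatrixOrder

/-- Polar decomposition for invertible matrices. -/
lemma polar_of_isUnit {M : ℕ} (A : Matrix (Fin M) (Fin M) ℂ) (hA : IsUnit A.det) :
    ∃ Q : Matrix (Fin M) (Fin M) ℂ, Qᴴ * Q = 1 ∧ Q * Qᴴ = 1 ∧ (Qᴴ * A).PosSemidef := by
  have h : (Aᴴ * A).PosSemidef := posSemidef_conjTranspose_mul_self A
  set P := CFC.sqrt (Aᴴ * A) with hPdef
  have hP : P.PosSemidef := (CFC.sqrt_nonneg _).posSemidef
  have hPP : P * P = Aᴴ * A := CFC.sqrt_mul_sqrt_self _ h.nonneg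
  have hdP : IsUnit P.det := by
    have h2 : P.det * P.det = star A.det * A.det := by
      rw [← det_mul, hPP, det_mul, det_conjTranspose]
    have : P.det * P.det ≠ 0 := by
      rw [h2]
      exact mul_ne_zero (star_ne_zero.2 hA.ne_zero) hA.ne_zero
    exact isUnit_iff_ne_zero.2 (fun hz => this (by rw [hz, zero_mul]))
  have hPH : Pᴴ = P := hP.1
  have hPinvH : (P⁻¹)ᴴ = P⁻¹ := by rw [conjTranspose_nonsing_inv, hPH]
  have hPiP : P⁻¹ * P = 1 := nonsing_inv_mul P hdP
  have hPPi : P * P⁻¹ = 1 := mul_nonsing_inv P hdP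
  refine ⟨A * P⁻¹, ?_, ?_, ?_⟩
  · rw [conjTranspose_mul, hPinvH]
    calc P⁻¹ * Aᴴ * (A * P⁻¹) = P⁻¹ * (Aᴴ * A) * P⁻¹ := by
          simp only [Matrix.mul_assoc]
      _ = P⁻¹ * (P * P) * P⁻¹ := by rw [hPP]
      _ = (P⁻¹ * P) * (P * P⁻¹) := by simp only [Matrix.mul_assoc]
      _ = 1 := by rw [hPiP, hPPi, Matrix.one_mul]
  · rw [mul_eq_one_comm]
    rw [conjTranspose_mul, hPinvH]
    calc P⁻¹ * Aᴴ * (A * P⁻¹) = P⁻¹ * (Aᴴ * A) * P⁻¹ := by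
          simp only [Matrix.mul_assoc]
      _ = P⁻¹ * (P * P) * P⁻¹ := by rw [hPP]
      _ = (P⁻¹ * P) * (P * P⁻¹) := by simp only [Matrix.mul_assoc]
      _ = 1 := by rw [hPiP, hPPi, Matrix.one_mul]
  · have : (A * P⁻¹)ᴴ * A = P := by
      rw [conjTranspose_mul, hPinvH, Matrix.mul_assoc, ← hPP, ← Matrix.mul_assoc,
        hPiP, Matrix.one_mul]
    rw [this]; exact hP

theorem exists_ewf_polar {M : ℕ}
    (Sig S : Matrix (Fin M) (Fin M) ℂ)
    (hSig : Sig.PosDef) :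
    ∃ W : Matrix (Fin M) (Fin M) ℂ, W * Sig * Wᴴ = 1 ∧ (W * S).PosSemidef := by
  classical
  have hS0 := hSig.posSemidef
  set R := CFC.sqrt Sig with hRdef
  have hR : R.PosSemidef := (CFC.sqrt_nonneg _).posSemidef
  have hRR : R * R = Sig := CFC.sqrt_mul_sqrt_self _ hS0.nonneg
  have hdSig : IsUnit Sig.det := isUnit_iff_ne_zero.2 hSig.det_pos.ne'
  have hdR : IsUnit R.det := by
    have h2 : R.det * R.det = Sig.det := by rw [← det_mul, hRR]
    exact isUnit_iff_ne_zero.2 fun hz => hdSig.ne_zero (by rw [← h2, hz, zero_mul])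
  have hRH : Rᴴ = R := hR.1
  have hRinvH : (R⁻¹)ᴴ = R⁻¹ := by rw [conjTranspose_nonsing_inv, hRH]
  have hRiR : R⁻¹ * R = 1 := nonsing_inv_mul R hdR
  have hRRi : R * R⁻¹ = 1 := mul_nonsing_inv R hdR
  set A : Matrix (Fin M) (Fin M) ℂ := R⁻¹ * S with hAdef
  -- bad set of shifts
  have hfin : ((Neg.neg ⁻¹' (spectrum ℂ A)) \ {0} : Set ℂ).Finite :=
    Set.Finite.diff ((A.finite_spectrum).preimage (neg_injective.injOn))
  have hclosed : IsClosed ((Neg.neg ⁻¹' (spectrum ℂ A)) \ {0} : Set ℂ) := hfin.isClosed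
  have h0mem : (0 : ℂ) ∈ ((Neg.neg ⁻¹' (spectrum ℂ A)) \ {0} : Set ℂ)ᶜ := fun h => h.2 rfl
  obtain ⟨ε, hε, hball⟩ := Metric.isOpen_iff.1 hclosed.isOpen_compl 0 h0mem
  set c : ℕ → ℂ := fun n => (((ε/2) / (n+1) : ℝ) : ℂ) with hcdef
  have hcpos : ∀ n : ℕ, (0:ℝ) < (ε/2) / ((n:ℝ)+1) := fun n =>
    div_pos (half_pos hε) (by positivity)
  have hcne : ∀ n, c n ≠ 0 := fun n => by
    simp only [hcdef, ne_eq, Complex.ofReal_eq_zero]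
    exact (hcpos n).ne'
  have hcball : ∀ n, c n ∈ Metric.ball (0:ℂ) ε := fun n => by
    simp only [Metric.mem_ball, dist_zero_right, hcdef, Complex.norm_real,
      Real.norm_eq_abs, abs_of_pos (hcpos n)]
    calc (ε/2) / (n+1) ≤ ε/2 := by
          apply div_le_self (half_pos hε).le; linarith [Nat.cast_nonneg (α := ℝ) n]
      _ < ε := half_lt_self hε
  have hunit : ∀ n, IsUnit (A + c n • 1).det := by
    intro n
    have hnot : c n ∉ (Neg.neg ⁻¹' (spectrum ℂ A) : Set ℂ) :=
      fun h => (hball (hcball n)) ⟨h, hcne n⟩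
    have : IsUnit (algebraMap ℂ (Matrix (Fin M) (Fin M) ℂ) (-(c n)) - A) :=
      spectrum.notMem_iff.mp hnot
    rw [Algebra.algebraMap_eq_smul_one, neg_smul] at this
    have h2 : A + c n • 1 = -(-(c n • (1:Matrix (Fin M) (Fin M) ℂ)) - A) := by
      rw [neg_sub, sub_neg_eq_add]
    rw [h2]
    exact ((isUnit_iff_isUnit_det _).1 this.neg)
  choose Q hQ1 hQ2 hQ3 using fun n => polar_of_isUnit (A + c n • 1) (hunit n)
  -- compactness
  set K : Set (Matrix (Fin M) (Fin M) ℂ) :=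
    Set.univ.pi fun _ : Fin M => Set.univ.pi fun _ : Fin M => Metric.closedBall (0:ℂ) 1
    with hKdef
  have hK : IsCompact K :=
    isCompact_univ_pi fun _ => isCompact_univ_pi fun _ => isCompact_closedBall _ _
  have hmem : ∀ n, Q n ∈ K := by
    intro n
    rw [hKdef]; refine Set.mem_univ_pi.2 ?_
    intro i
    rw [Set.mem_univ_pi]
    intro j
    rw [Metric.mem_closedBall, dist_zero_right]
    have hrow : ∑ k, Complex.normSq (Q n i k) = 1 := by
      have := congrFun (congrFun (hQ2 n) i) i
      rw [Matrix.mul_apply] at this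
      simp only [conjTranspose_apply, one_apply_eq] at this
      have h2 : ∑ k, (Complex.normSq (Q n i k) : ℂ) = 1 := by
        rw [← this]
        exact Finset.sum_congr rfl fun k _ => by
          rw [← Complex.mul_conj]; rfl
      have := congrArg Complex.re h2
      simpa using this
    have hle : Complex.normSq (Q n i j) ≤ 1 := by
      rw [← hrow]
      exact Finset.single_le_sum (fun k _ => Complex.normSq_nonneg _) (Finset.mem_univ j)
    have hnsq : Complex.normSq (Q n i j) = ‖Q n i j‖^2 := by
      rw [Complex.normSq_eq_norm_sq]
    nlinarith [norm_nonneg (Q n i j)]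
  haveI : FirstCountableTopology (Matrix (Fin M) (Fin M) ℂ) :=
    inferInstanceAs (FirstCountableTopology (Fin M → Fin M → ℂ))
  obtain ⟨L, _, φ, hφ, hconv⟩ := hK.tendsto_subseq hmem
  -- limits
  have hcont_ct : Continuous fun X : Matrix (Fin M) (Fin M) ℂ => Xᴴ :=
    continuous_id.matrix_conjTranspose
  have hQct : Filter.Tendsto (fun n => (Q (φ n))ᴴ) Filter.atTop (nhds Lᴴ) :=
    (hcont_ct.tendsto L).comp hconv
  have hctend : Filter.Tendsto (fun n => c (φ n)) Filter.atTop (nhds 0) := by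
    have hreal : Filter.Tendsto (fun n : ℕ => ((ε/2) / (n+1) : ℝ)) Filter.atTop (nhds 0) := by
      have := tendsto_one_div_add_atTop_nhds_zero_nat.const_mul (ε/2)
      simpa [div_eq_mul_inv, mul_comm] using this
    have : Filter.Tendsto c Filter.atTop (nhds 0) := by
      rw [hcdef]
      have h := (Complex.continuous_ofReal.tendsto 0).comp hreal
      rw [Complex.ofReal_zero] at h
      exact h
    exact this.comp hφ.tendsto_atTop
  have hAtend : Filter.Tendsto (fun n => A + c (φ n) • (1:Matrix (Fin M) (Fin M) ℂ))
      Filter.atTop (nhds A) := by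
    have h1 : Filter.Tendsto (fun n => c (φ n) • (1:Matrix (Fin M) (Fin M) ℂ))
        Filter.atTop (nhds 0) := by
      have := hctend.smul_const (1:Matrix (Fin M) (Fin M) ℂ)
      simpa using this
    have := (tendsto_const_nhds (x := A) (f := Filter.atTop (α := ℕ))).add h1
    simpa using this
  have hPtend : Filter.Tendsto (fun n => (Q (φ n))ᴴ * (A + c (φ n) • 1))
      Filter.atTop (nhds (Lᴴ * A)) := hQct.mul hAtend
  -- L unitary
  have hLunit : Lᴴ * L = 1 := by
    have h1 : Filter.Tendsto (fun n => (Q (φ n))ᴴ * Q (φ n)) Filter.atTop (nhds (Lᴴ * L)) :=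
      hQct.mul hconv
    have h2 : (fun n => (Q (φ n))ᴴ * Q (φ n)) = fun _ => (1:Matrix (Fin M) (Fin M) ℂ) :=
      funext fun n => hQ1 (φ n)
    rw [h2] at h1
    exact tendsto_nhds_unique h1 tendsto_const_nhds
  -- psd limit
  have hpsd : (Lᴴ * A).PosSemidef := by
    refine posSemidef_iff_dotProduct_mulVec.2 ⟨?_, ?_⟩
    · have h1 : Filter.Tendsto (fun n => ((Q (φ n))ᴴ * (A + c (φ n) • 1))ᴴ)
          Filter.atTop (nhds ((Lᴴ * A)ᴴ)) := (hcont_ct.tendsto _).comp hPtend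
      have h2 : (fun n => ((Q (φ n))ᴴ * (A + c (φ n) • 1))ᴴ)
          = fun n => (Q (φ n))ᴴ * (A + c (φ n) • 1) :=
        funext fun n => (hQ3 (φ n)).1
      rw [h2] at h1
      exact tendsto_nhds_unique h1 hPtend
    · intro x
      have hcont : Continuous fun N : Matrix (Fin M) (Fin M) ℂ =>
          dotProduct (star x) (N *ᵥ x) :=
        continuous_const.dotProduct (continuous_id.matrix_mulVec continuous_const)
      have hz : Filter.Tendsto
          (fun n => dotProduct (star x) (((Q (φ n))ᴴ * (A + c (φ n) • 1)) *ᵥ x))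
          Filter.atTop (nhds (dotProduct (star x) ((Lᴴ * A) *ᵥ x))) :=
        (hcont.tendsto _).comp hPtend
      exact ge_of_tendsto' hz fun n => (hQ3 (φ n)).dotProduct_mulVec_nonneg x
  -- assemble
  refine ⟨Lᴴ * R⁻¹, ?_, ?_⟩
  · have : Lᴴ * R⁻¹ * Sig * (Lᴴ * R⁻¹)ᴴ = Lᴴ * (R⁻¹ * Sig * R⁻¹) * L := by
      rw [conjTranspose_mul, hRinvH, conjTranspose_conjTranspose]
      simp only [Matrix.mul_assoc]
    rw [this, ← hRR, ← Matrix.mul_assoc R⁻¹ R R, hRiR, Matrix.one_mul, hRRi,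
      Matrix.mul_one, hLunit]
  · have : Lᴴ * R⁻¹ * S = Lᴴ * A := by rw [hAdef, Matrix.mul_assoc]
    rw [this]
    exact hpsd
end
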